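/- For every prime p and every integer n ≥ 1, the p-adic valuation of Ḡ_n := ∏_{k=0}^{n} C(n,k) equals (2/(p-1))·S_p(n) − ((n-1)/(p-1))·d_p(n), where d_p(n) is the base-p digit sum of n and S_p(n) = Σ_{j=0}^{n-1} d_p(j). -/

import Mathlib

open Finset Nat

private lemma digit_sum_subadd {p : ℕ} [hp : Fact p.Prime] {k n : ℕ} (h : k ≤ n) :
    (p.digits n).sum ≤ (p.digits k).sum + (p.digits (n - k)).sum := by
  have h1 := sub_one_mul_padicValNat_factorial (p := p) n
  have h2 := sub_one_mul_padicValNat_factorial (p := p) k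
  have h3 := sub_one_mul_padicValNat_factorial (p := p) (n - k)
  have hfac : n ! = n.choose k * (k ! * (n - k)!) := by
    rw [← Nat.choose_mul_factorial_mul_factorial h]; ring
  have hv : padicValNat p (n !) =
      padicValNat p (n.choose k) + (padicValNat p (k !) + padicValNat p ((n - k)!)) := by
    rw [hfac, padicValNat.mul (Nat.choose_pos h).ne'
        (Nat.mul_pos k.factorial_pos (n - k).factorial_pos).ne',
      padicValNat.mul k.factorial_pos.ne' (n - k).factorial_pos.ne']
  have hle : (p - 1) * padicValNat p (k !) + (p - 1) * padicValNat p ((n - k)!)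
      ≤ (p - 1) * padicValNat p (n !) := by
    rw [hv, Nat.mul_add, Nat.mul_add]; omega
  rw [h1, h2, h3] at hle
  have hd1 := Nat.digit_sum_le p n
  have hd2 := Nat.digit_sum_le p k
  have hd3 := Nat.digit_sum_le p (n - k)
  omega

private lemma key {p : ℕ} [hp : Fact p.Prime] {k n : ℕ} (h : k ≤ n) :
    ((padicValNat p (n.choose k) : ℚ)) * ((p : ℚ) - 1) =
      ((p.digits k).sum : ℚ) + ((p.digits (n - k)).sum : ℚ) - ((p.digits n).sum : ℚ) := by
  have h1 := sub_one_mul_padicValNat_choose_eq_sub_sum_digits (p := p) h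
  have h2 := digit_sum_subadd (p := p) h
  have hp1 : 1 ≤ p := hp.out.one_le
  have e : (((p - 1) * padicValNat p (n.choose k) : ℕ) : ℚ)
      = (((p.digits k).sum + (p.digits (n - k)).sum : ℕ) : ℚ) - ((p.digits n).sum : ℚ) := by
    rw [h1, Nat.cast_sub h2]
  rw [Nat.cast_mul, Nat.cast_sub hp1, Nat.cast_add, Nat.cast_one] at e
  linarith [e]

private lemma padic_prod {p : ℕ} [Fact p.Prime] (s : Finset ℕ) (f : ℕ → ℕ)
    (h : ∀ i ∈ s, f i ≠ 0) :
    padicValNat p (∏ i ∈ s, f i) = ∑ i ∈ s, padicValNat p (f i) := by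
  classical
  induction s using Finset.induction_on with
  | empty => simp
  | insert _ _ hx ih =>
    rename_i a s'
    rw [Finset.prod_insert hx, Finset.sum_insert hx,
      padicValNat.mul (h a (Finset.mem_insert_self a s'))
        (Finset.prod_ne_zero_iff.2 fun i hi => h i (Finset.mem_insert_of_mem hi)),
      ih fun i hi => h i (Finset.mem_insert_of_mem hi)]

theorem padicValNat_binomial_product (p n : ℕ) (hp : p.Prime) (hn : 1 ≤ n) :
    (padicValNat p (∏ k ∈ Finset.range (n + 1), n.choose k) : ℚ) =
      2 / ((p : ℚ) - 1) * (∑ j ∈ Finset.range n, ((Nat.digits p j).sum : ℚ))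
        - ((n : ℚ) - 1) / ((p : ℚ) - 1) * ((Nat.digits p n).sum : ℚ) := by
  haveI : Fact p.Prime := ⟨hp⟩
  have hp2 : 2 ≤ p := hp.two_le
  have hpne : (p : ℚ) - 1 ≠ 0 := by
    have : (2 : ℚ) ≤ (p : ℚ) := by exact_mod_cast hp2
    linarith
  have hval : (padicValNat p (∏ k ∈ Finset.range (n + 1), n.choose k) : ℚ) =
      ∑ k ∈ Finset.range (n + 1), (padicValNat p (n.choose k) : ℚ) := by
    rw [← Nat.cast_sum]
    congr 1
    exact padic_prod _ _ fun k hk =>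
      (Nat.choose_pos (by simpa [Nat.lt_succ_iff] using hk)).ne'
  rw [hval]
  have hsum : ∑ k ∈ Finset.range (n + 1), (padicValNat p (n.choose k) : ℚ) * ((p : ℚ) - 1) =
      ∑ k ∈ Finset.range (n + 1),
        (((p.digits k).sum : ℚ) + ((p.digits (n - k)).sum : ℚ) - ((p.digits n).sum : ℚ)) := by
    refine Finset.sum_congr rfl fun k hk => key (by simpa [Nat.lt_succ_iff] using hk)
  have hrefl : ∑ k ∈ Finset.range (n + 1), ((p.digits (n - k)).sum : ℚ) =
      ∑ k ∈ Finset.range (n + 1), ((p.digits k).sum : ℚ) := by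
    have := Finset.sum_range_reflect (fun j => ((p.digits j).sum : ℚ)) (n + 1)
    simpa using this
  rw [show 2 / ((p : ℚ) - 1) * (∑ j ∈ Finset.range n, ((Nat.digits p j).sum : ℚ))
        - ((n : ℚ) - 1) / ((p : ℚ) - 1) * ((Nat.digits p n).sum : ℚ)
      = (2 * (∑ j ∈ Finset.range n, ((Nat.digits p j).sum : ℚ))
        - ((n : ℚ) - 1) * ((Nat.digits p n).sum : ℚ)) / ((p : ℚ) - 1) by ring]
  rw [eq_div_iff hpne]
  rw [Finset.sum_mul]
  rw [hsum]
  rw [Finset.sum_sub_distrib, Finset.sum_add_distrib, hrefl, Finset.sum_const,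
    Finset.card_range, Finset.sum_range_succ, nsmul_eq_mul, Nat.cast_add, Nat.cast_one]
  ring
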